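/- Concatenating two geodesics at a common endpoint need not yield a geodesic: there exists a covariant causet and vertices a < c < b such that some path from a to c and some path from c to b are geodesics, but their concatenation is not a geodesic from a to b. -/

import Mathlib

/-- In a covariant causet encoded by its shell function `sh` (with canonical
shell-by-shell labels `Fin n`), `j` is a child of `i` iff `j` lies in the shell
just after that of `i`. -/
def parentRel {n : ℕ} (sh : Fin n → ℕ) (i j : Fin n) : Prop :=
  sh j = sh i + 1

/-- A path from `a` to `b`: a parent-child chain starting at `a`, ending at `b`. -/
def IsPathSh {n : ℕ} (sh : Fin n → ℕ) (a b : Fin n) (p : List (Fin n)) : Prop :=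
  p.Chain' (parentRel sh) ∧ p.head? = some a ∧ p.getLast? = some b

/-- Path length `(Σ (i_j − i_{j−1})²)^{1/2}` computed from the labels. -/
noncomputable def lenSh {n : ℕ} (p : List (Fin n)) : ℝ :=
  Real.sqrt (((p.zip p.tail).map fun q =>
    (((q.2 : ℕ) : ℝ) - ((q.1 : ℕ) : ℝ)) ^ 2).sum)

/-- A geodesic: a path of minimal length between its endpoints. -/
def IsGeoSh {n : ℕ} (sh : Fin n → ℕ) (a b : Fin n) (p : List (Fin n)) : Prop :=
  IsPathSh sh a b p ∧ ∀ q : List (Fin n), IsPathSh sh a b q → lenSh p ≤ lenSh q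

instance {n : ℕ} (sh : Fin n → ℕ) : DecidableRel (parentRel sh) :=
  fun i j => inferInstanceAs (Decidable (sh j = sh i + 1))

/-- Along a parent-child chain, the shell grows by one each step. -/
lemma shell_of_path {n : ℕ} (sh : Fin n → ℕ) :
    ∀ (p : List (Fin n)) (a b : Fin n), p.Chain' (parentRel sh) →
      p.head? = some a → p.getLast? = some b → sh a + p.length = sh b + 1 := by
  intro p
  induction p with
  | nil => intro a b _ h; simp at h
  | cons x t ih =>
    intro a b hc hh hl
    simp at hh; subst hh
    cases t with
    | nil => simp at hl; subst hl; simp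
    | cons y s =>
      rw [List.Chain', List.isChain_cons_cons] at hc
      have h1 : sh y = sh x + 1 := hc.1
      have h2 := ih y b hc.2 rfl (by simpa [List.getLast?_cons_cons] using hl)
      simp only [List.length_cons] at *
      omega

theorem geodesic_concat_not_geodesic :
    ∃ (n : ℕ) (sh : Fin n → ℕ),
      (∀ i j : Fin n, i ≤ j → sh i ≤ sh j) ∧
      (∀ i j : Fin n, sh i < sh j → i < j) ∧
      (∀ (i : Fin n) (s : ℕ), s ≤ sh i → ∃ j : Fin n, sh j = s) ∧
      ∃ (a c b : Fin n) (p q : List (Fin n)),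
        sh a < sh c ∧ sh c < sh b ∧
        IsGeoSh sh a c p ∧ IsGeoSh sh c b q ∧
        ¬ IsGeoSh sh a b (p ++ q.tail) := by
  refine ⟨8, ![0,1,1,2,2,2,3,3], ?_, ?_, ?_, 0, 5, 6, [0,2,5], [5,6], ?_, ?_, ?_, ?_, ?_⟩
  · decide
  · decide
  · intro i s hs
    have hi : (![0,1,1,2,2,2,3,3] : Fin 8 → ℕ) i ≤ 3 := by fin_cases i <;> decide
    have hs3 : s ≤ 3 := hs.trans hi
    interval_cases s
    · exact ⟨0, rfl⟩
    · exact ⟨1, rfl⟩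
    · exact ⟨3, rfl⟩
    · exact ⟨6, rfl⟩
  · decide
  · decide
  · constructor
    · exact ⟨by simp only [List.Chain', List.isChain_cons_cons, List.isChain_singleton]; decide, rfl, rfl⟩
    · intro q hq
      obtain ⟨hc, hh, hl⟩ := hq
      have hlen := shell_of_path _ q 0 5 hc hh hl
      have h0 : (![0,1,1,2,2,2,3,3] : Fin 8 → ℕ) 0 = 0 := rfl
      have h5 : (![0,1,1,2,2,2,3,3] : Fin 8 → ℕ) 5 = 2 := rfl
      rw [h0, h5] at hlen
      have hq3 : q.length = 3 := by omega
      match q, hq3 with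
      | [w, x, y], _ =>
        simp only [List.head?_cons, Option.some.injEq] at hh
        have hy : y = 5 := by simpa using hl
        subst hh; subst hy
        rw [List.Chain', List.isChain_cons_cons, List.isChain_cons_cons] at hc
        have hx : (![0,1,1,2,2,2,3,3] : Fin 8 → ℕ) x = 1 := by
          have := hc.1; simpa [parentRel] using this
        fin_cases x <;>
          first
          | exact absurd hx (by decide)
          | · simp only [lenSh, List.zip, List.tail_cons, List.zipWith_cons_cons,
                List.zipWith_nil_right, List.map_cons, List.map_nil, List.sum_cons,
                List.sum_nil]
              apply Real.sqrt_le_sqrt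
              norm_num [show ((1:Fin 8):ℕ) = 1 from rfl, show ((2:Fin 8):ℕ) = 2 from rfl, show ((4:Fin 8):ℕ) = 4 from rfl, show ((5:Fin 8):ℕ) = 5 from rfl, show ((6:Fin 8):ℕ) = 6 from rfl]
  · constructor
    · exact ⟨by simp only [List.Chain', List.isChain_cons_cons, List.isChain_singleton]; decide, rfl, rfl⟩
    · intro q hq
      obtain ⟨hc, hh, hl⟩ := hq
      have hlen := shell_of_path _ q 5 6 hc hh hl
      have h5 : (![0,1,1,2,2,2,3,3] : Fin 8 → ℕ) 5 = 2 := rfl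
      have h6 : (![0,1,1,2,2,2,3,3] : Fin 8 → ℕ) 6 = 3 := rfl
      rw [h5, h6] at hlen
      have hq2 : q.length = 2 := by omega
      match q, hq2 with
      | [w, x], _ =>
        have hw : w = 5 := by simpa using hh
        have hx : x = 6 := by simpa using hl
        subst hw; subst hx
        exact le_refl _
  · intro h
    have h2 := h.2 [0,2,4,6] ⟨by simp only [List.Chain', List.isChain_cons_cons, List.isChain_singleton]; decide, rfl, rfl⟩
    have e1 : lenSh (([0,2,5] : List (Fin 8)) ++ ([5,6] : List (Fin 8)).tail)
        = Real.sqrt 14 := by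
      simp only [List.cons_append, List.nil_append, List.tail_cons, lenSh, List.zip,
        List.tail_cons, List.zipWith_cons_cons, List.zipWith_nil_right, List.map_cons,
        List.map_nil, List.sum_cons, List.sum_nil]
      norm_num [show ((1:Fin 8):ℕ) = 1 from rfl, show ((2:Fin 8):ℕ) = 2 from rfl, show ((4:Fin 8):ℕ) = 4 from rfl, show ((5:Fin 8):ℕ) = 5 from rfl, show ((6:Fin 8):ℕ) = 6 from rfl]
    have e2 : lenSh ([0,2,4,6] : List (Fin 8)) = Real.sqrt 12 := by
      simp only [lenSh, List.zip, List.tail_cons, List.zipWith_cons_cons,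
        List.zipWith_nil_right, List.map_cons, List.map_nil, List.sum_cons, List.sum_nil]
      norm_num [show ((1:Fin 8):ℕ) = 1 from rfl, show ((2:Fin 8):ℕ) = 2 from rfl, show ((4:Fin 8):ℕ) = 4 from rfl, show ((5:Fin 8):ℕ) = 5 from rfl, show ((6:Fin 8):ℕ) = 6 from rfl]
    rw [e1, e2] at h2
    have := Real.sqrt_lt_sqrt (by norm_num : (0:ℝ) ≤ 12) (by norm_num : (12:ℝ) < 14)
    linarith
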